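/- Let n ≥ 2 and let A be a real n × n matrix with Aᵀ * A = 1 and det A = 1 (i.e. A is special orthogonal). Then there exist a natural number M, angles θ : Fin M → ℝ, and vectors a, b : Fin M → (Fin n → ℝ) with, for each m, ‖a m‖ = 1, ‖b m‖ = 1, and ⟪a m, b m⟫ = 0, such that A equals the ordered product over m of the matrix exponentials Matrix.exp (θ m • (vecMulVec (a m) (b m) − vecMulVec (b m) (a m))). That is, every special orthogonal matrix is a finite product of planar (Givens) rotations, each the exponential of a rank-2 skew-symmetric matrix. -/

import Mathlib

open Matrix
open scoped Nat

noncomputable section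
namespace Stmt17Aux

variable {n : ℕ}

theorem vmv_mul_vmv (a b c d : Fin n → ℝ) :
    vecMulVec a b * vecMulVec c d = (b ⬝ᵥ c) • vecMulVec a d := by
  ext i j
  simp only [mul_apply, vecMulVec_apply, dotProduct, Matrix.smul_apply, smul_eq_mul, Finset.sum_mul]
  exact Finset.sum_congr rfl fun k _ => by ring

theorem vmv_mulVec (a b : Fin n → ℝ) (x : Fin n → ℝ) :
    (vecMulVec a b).mulVec x = (b ⬝ᵥ x) • a := by
  ext i
  simp only [mulVec, vecMulVec_apply, dotProduct, Pi.smul_apply, smul_eq_mul, Finset.sum_mul]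
  exact Finset.sum_congr rfl fun k _ => by ring

theorem vmv_transpose (a b : Fin n → ℝ) : (vecMulVec a b)ᵀ = vecMulVec b a := by
  ext i j; simp [vecMulVec_apply, transpose_apply, mul_comm]

/-- the rank-2 skew-symmetric generator -/
def rS (a b : Fin n → ℝ) : Matrix (Fin n) (Fin n) ℝ := vecMulVec a b - vecMulVec b a
/-- twice the projection onto the rotation plane -/
def rP (a b : Fin n → ℝ) : Matrix (Fin n) (Fin n) ℝ := vecMulVec a a + vecMulVec b b
/-- the planar rotation by angle `θ` in the plane spanned by `a, b` -/
def rot (θ : ℝ) (a b : Fin n → ℝ) : Matrix (Fin n) (Fin n) ℝ :=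
  1 + Real.sin θ • rS a b - (1 - Real.cos θ) • rP a b

theorem rot_zero (a b : Fin n → ℝ) : rot 0 a b = 1 := by simp [rot]

theorem rot_transpose (θ : ℝ) (a b : Fin n → ℝ) : (rot θ a b)ᵀ = rot (-θ) a b := by
  simp only [rot, rS, rP, transpose_add, transpose_sub, transpose_smul, transpose_one,
    vmv_transpose, Real.sin_neg, Real.cos_neg, neg_smul]
  module

theorem rot_mulVec (θ : ℝ) (a b : Fin n → ℝ) (x : Fin n → ℝ) :
    (rot θ a b).mulVec x = x + Real.sin θ • ((b ⬝ᵥ x) • a - (a ⬝ᵥ x) • b)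
      - (1 - Real.cos θ) • ((a ⬝ᵥ x) • a + (b ⬝ᵥ x) • b) := by
  simp only [rot, rS, rP, sub_mulVec, add_mulVec, one_mulVec, smul_mulVec, vmv_mulVec]

section ortho
variable {a b : Fin n → ℝ} (ha : a ⬝ᵥ a = 1) (hb : b ⬝ᵥ b = 1) (hab : a ⬝ᵥ b = 0)
include ha hb hab

theorem hSS : rS a b * rS a b = -(rP a b) := by
  have hba : b ⬝ᵥ a = 0 := by rwa [dotProduct_comm]
  simp only [rS, rP, sub_mul, mul_sub, vmv_mul_vmv, ha, hb, hab, hba, one_smul, zero_smul]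
  abel

theorem hSP : rS a b * rP a b = rS a b := by
  have hba : b ⬝ᵥ a = 0 := by rwa [dotProduct_comm]
  simp only [rS, rP, sub_mul, mul_add, vmv_mul_vmv, ha, hb, hab, hba, one_smul, zero_smul]
  abel

theorem hPS : rP a b * rS a b = rS a b := by
  have hba : b ⬝ᵥ a = 0 := by rwa [dotProduct_comm]
  simp only [rS, rP, add_mul, mul_sub, vmv_mul_vmv, ha, hb, hab, hba, one_smul, zero_smul]
  abel

theorem hPP : rP a b * rP a b = rP a b := by
  have hba : b ⬝ᵥ a = 0 := by rwa [dotProduct_comm]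
  simp only [rS, rP, add_mul, mul_add, vmv_mul_vmv, ha, hb, hab, hba, one_smul, zero_smul]
  abel

theorem rot_mul_rot (θ₁ θ₂ : ℝ) :
    rot θ₁ a b * rot θ₂ a b = rot (θ₁ + θ₂) a b := by
  simp only [rot, add_mul, mul_add, sub_mul, mul_sub, smul_mul_assoc, mul_smul_comm,
    one_mul, mul_one, smul_smul, hSS ha hb hab, hSP ha hb hab, hPS ha hb hab, hPP ha hb hab,
    Real.sin_add, Real.cos_add, smul_neg]
  module

theorem rot_T_mul (θ : ℝ) : (rot θ a b)ᵀ * rot θ a b = 1 := by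
  rw [rot_transpose, rot_mul_rot ha hb hab, neg_add_cancel, rot_zero]

theorem rot_det (θ : ℝ) : (rot θ a b).det = 1 := by
  have h1 : (rot θ a b).det * (rot θ a b).det = 1 := by
    have := congrArg Matrix.det (rot_T_mul ha hb hab θ)
    rwa [det_mul, det_transpose, det_one] at this
  have h2 : (rot θ a b).det = (rot (θ/2) a b).det * (rot (θ/2) a b).det := by
    rw [← det_mul, rot_mul_rot ha hb hab, add_halves]
  nlinarith [sq_nonneg ((rot (θ/2) a b).det)]

end ortho

theorem rot_mulVec_of_orth (θ : ℝ) (a b : Fin n → ℝ) (x : Fin n → ℝ)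
    (hax : a ⬝ᵥ x = 0) (hbx : b ⬝ᵥ x = 0) :
    (rot θ a b).mulVec x = x := by
  rw [rot_mulVec, hax, hbx]
  simp

/-! ### The power series computation -/

theorem sinser (θ : ℝ) :
    HasSum (fun k : ℕ => if k % 2 = 1 then (-1 : ℝ) ^ (k / 2) * θ ^ k / (k !) else 0)
      (Real.sin θ) := by
  have base := Real.hasSum_sin θ
  have hinj : Function.Injective (fun m : ℕ => 2 * m + 1) := fun x y h => by
    simp only at h; omega
  rw [← hinj.hasSum_iff]
  · convert base using 2 with m
    show (if (2*m+1) % 2 = 1 then (-1 : ℝ) ^ ((2*m+1) / 2) * θ ^ (2*m+1) / ((2*m+1) !) else 0) = _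
    rw [if_pos (by omega)]
    have h2 : (2*m+1)/2 = m := by omega
    rw [h2]
  · intro k hk
    rw [if_neg]
    intro hmod
    exact hk ⟨k / 2, by show 2 * (k/2) + 1 = k; omega⟩

theorem cosser (θ : ℝ) :
    HasSum (fun k : ℕ => if k % 2 = 0 ∧ k ≠ 0 then (-1 : ℝ) ^ (k / 2 + 1) * θ ^ k / (k !) else 0)
      (1 - Real.cos θ) := by
  have base := Real.hasSum_cos θ
  have hshift : HasSum (fun m : ℕ => (-1 : ℝ) ^ (m+1) * θ ^ (2*(m+1)) / ((2*(m+1)) !))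
      (Real.cos θ - 1) := by
    have h := (hasSum_nat_add_iff'
      (f := fun m : ℕ => (-1 : ℝ) ^ m * θ ^ (2*m) / ((2*m) !)) 1).mpr base
    simpa using h
  have hneg := hshift.neg
  rw [neg_sub] at hneg
  have hinj : Function.Injective (fun m : ℕ => 2 * (m+1)) := fun x y h => by
    simp only at h; omega
  rw [← hinj.hasSum_iff]
  · convert hneg using 2 with m
    show (if (2*(m+1)) % 2 = 0 ∧ 2*(m+1) ≠ 0 then
        (-1 : ℝ) ^ ((2*(m+1)) / 2 + 1) * θ ^ (2*(m+1)) / ((2*(m+1)) !) else 0) = _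
    rw [if_pos (by omega)]
    have h2 : 2 * (m+1) / 2 + 1 = m + 2 := by omega
    rw [h2, pow_succ, pow_succ]
    ring
    rfl
  · intro k hk
    rw [if_neg]
    rintro ⟨he, h0⟩
    exact hk ⟨k / 2 - 1, by show 2 * (k/2 - 1 + 1) = k; omega⟩

theorem exp_eq (θ : ℝ) (S : Matrix (Fin n) (Fin n) ℝ) (hS3 : S * S * S = -S) :
    NormedSpace.exp (θ • S) = 1 + Real.sin θ • S + (1 - Real.cos θ) • (S * S) := by
  have hodd : ∀ m : ℕ, S ^ (2 * m + 1) = ((-1 : ℝ) ^ m) • S := by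
    intro m
    induction m with
    | zero => simp
    | succ m ih =>
      have : 2 * (m + 1) + 1 = (2 * m + 1) + 1 + 1 := by ring
      rw [this, pow_succ, pow_succ, ih]
      rw [smul_mul_assoc, smul_mul_assoc, hS3, pow_succ]
      simp [smul_smul, mul_comm]
  have heven : ∀ m : ℕ, S ^ (2 * m + 2) = ((-1 : ℝ) ^ m) • (S * S) := by
    intro m
    have : 2 * m + 2 = (2 * m + 1) + 1 := by ring
    rw [this, pow_succ, hodd m, smul_mul_assoc]
  rw [NormedSpace.exp_eq_tsum (𝕂 := ℝ)]
  refine HasSum.tsum_eq ?_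
  have h0 : HasSum (fun k : ℕ => if k = 0 then (1 : Matrix (Fin n) (Fin n) ℝ) else 0) 1 :=
    hasSum_ite_eq 0 1
  have h1 : HasSum (fun k : ℕ =>
      (if k % 2 = 1 then (-1 : ℝ) ^ (k / 2) * θ ^ k / (k !) else 0) • S)
      (Real.sin θ • S) := (sinser θ).smul_const S
  have h2 : HasSum (fun k : ℕ =>
      (if k % 2 = 0 ∧ k ≠ 0 then (-1 : ℝ) ^ (k / 2 + 1) * θ ^ k / (k !) else 0) • (S * S))
      ((1 - Real.cos θ) • (S * S)) := (cosser θ).smul_const (S * S)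
  have htot := (h0.add h1).add h2
  convert htot using 1
  · rfl
  funext k
  rcases Nat.even_or_odd' k with ⟨m, hm | hm⟩
  · rcases Nat.eq_zero_or_pos m with hm0 | hmpos
    · subst hm0; subst hm
      norm_num
    · obtain ⟨m', rfl⟩ : ∃ m', m = m' + 1 := ⟨m - 1, by omega⟩
      subst hm
      have hk2 : 2 * (m' + 1) = 2 * m' + 2 := by ring
      rw [hk2, smul_pow, heven m']
      rw [if_neg (by omega), if_neg (by omega : ¬ (2 * m' + 2) % 2 = 1),
        if_pos (by constructor <;> omega)]
      have hd : (2 * m' + 2) / 2 + 1 = m' + 2 := by omega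
      rw [hd]
      simp only [zero_smul, zero_add, add_zero, smul_smul]
      congr 1
      rw [pow_succ, pow_succ]
      ring
  · subst hm
    rw [smul_pow, hodd m]
    rw [if_neg (by omega), if_pos (by omega : (2 * m + 1) % 2 = 1), if_neg (by omega)]
    have hd : (2 * m + 1) / 2 = m := by omega
    rw [hd]
    simp only [zero_smul, zero_add, add_zero, smul_smul]
    congr 1
    ring

theorem exp_eq_rot {a b : Fin n → ℝ} (ha : a ⬝ᵥ a = 1) (hb : b ⬝ᵥ b = 1) (hab : a ⬝ᵥ b = 0)
    (θ : ℝ) : NormedSpace.exp (θ • rS a b) = rot θ a b := by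
  rw [exp_eq θ (rS a b) (by rw [hSS ha hb hab, neg_mul, hPS ha hb hab]), hSS ha hb hab, rot,
    smul_neg, ← sub_eq_add_neg]

/-- `R` is a planar rotation -/
def IsRot (R : Matrix (Fin n) (Fin n) ℝ) : Prop :=
  ∃ (θ : ℝ) (a b : Fin n → ℝ), a ⬝ᵥ a = 1 ∧ b ⬝ᵥ b = 1 ∧ a ⬝ᵥ b = 0 ∧
    NormedSpace.exp (θ • (vecMulVec a b - vecMulVec b a)) = R

theorem isRot_rot {a b : Fin n → ℝ} (ha : a ⬝ᵥ a = 1) (hb : b ⬝ᵥ b = 1) (hab : a ⬝ᵥ b = 0)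
    (θ : ℝ) : IsRot (rot θ a b) :=
  ⟨θ, a, b, ha, hb, hab, exp_eq_rot ha hb hab θ⟩

/-! ### The Givens elimination -/

theorem aux (d : ℕ) : ∀ (k : ℕ) (A : Matrix (Fin n) (Fin n) ℝ), n ≤ k + d →
    Aᵀ * A = 1 → A.det = 1 →
    (∀ j : Fin n, (j : ℕ) < k → ∀ i, A i j = (Pi.single j 1 : Fin n → ℝ) i) →
    ∃ L : List (Matrix (Fin n) (Fin n) ℝ), (∀ R ∈ L, IsRot R) ∧ L.prod = A := by
  induction d with
  | zero =>
    intro k A hnk hA hdet hcol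
    refine ⟨[], by simp, ?_⟩
    rw [List.prod_nil]
    ext i j
    rw [hcol j (lt_of_lt_of_le j.2 (by omega)) i, one_apply, Pi.single_apply]
  | succ d ih =>
    intro k A hnk hA hdet hcol
    by_cases hle : n ≤ k + d
    · exact ih k A hle hA hdet hcol
    push_neg at hle
    have hkn : k < n := by omega
    set kk : Fin n := ⟨k, hkn⟩ with hkk
    have hkkval : (kk : ℕ) = k := rfl
    set u : Fin n → ℝ := fun i => A i kk with hudef
    have hentry : ∀ p q : Fin n, (fun i => A i p) ⬝ᵥ (fun i => A i q) = if p = q then 1 else 0 := by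
      intro p q
      have := congrArg (fun M => M p q) hA
      simpa [mul_apply, transpose_apply, dotProduct, one_apply] using this
    have huu : u ⬝ᵥ u = 1 := by simpa using hentry kk kk
    have hucol : ∀ j : Fin n, (j : ℕ) < k → u j = 0 := by
      intro j hj
      have hne : j ≠ kk := by intro h; rw [h] at hj; omega
      have h := hentry j kk
      rw [if_neg hne] at h
      have hcolj : (fun i => A i j) = Pi.single j (1:ℝ) := funext fun i => hcol j hj i
      rw [hcolj, single_dotProduct, one_mul] at h
      exact h
    have hAcol : ∀ j : Fin n, (j : ℕ) < k → A.mulVec (Pi.single j 1) = Pi.single j 1 := by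
      intro j hj
      rw [mulVec_single]
      funext i
      rw [MulOpposite.op_one, one_smul]
      exact hcol j hj i
    have hAkk : A.mulVec (Pi.single kk 1) = u := by
      rw [mulVec_single]; funext i; rw [MulOpposite.op_one, one_smul]; rfl
    -- the main step combinator
    have main : ∀ (θ : ℝ) (a b : Fin n → ℝ), a ⬝ᵥ a = 1 → b ⬝ᵥ b = 1 → a ⬝ᵥ b = 0 →
        (∀ j : Fin n, (j : ℕ) < k → a j = 0 ∧ b j = 0) →
        (rot θ a b).mulVec u = Pi.single kk 1 →
        ∃ L : List (Matrix (Fin n) (Fin n) ℝ), (∀ R ∈ L, IsRot R) ∧ L.prod = A := by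
      intro θ a b ha hb hab horth hrotu
      set B := rot θ a b * A with hB
      have hBorth : Bᵀ * B = 1 := by
        rw [hB, transpose_mul, Matrix.mul_assoc, ← Matrix.mul_assoc (rot θ a b)ᵀ,
          rot_T_mul ha hb hab, Matrix.one_mul, hA]
      have hBdet : B.det = 1 := by
        rw [hB, det_mul, rot_det ha hb hab, hdet, one_mul]
      have hBcol : ∀ j : Fin n, (j : ℕ) < k + 1 → ∀ i, B i j = (Pi.single j 1 : Fin n → ℝ) i := by
        intro j hj i
        have hmv : B.mulVec (Pi.single j 1) = Pi.single j 1 := by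
          rw [hB, ← mulVec_mulVec]
          rcases Nat.lt_or_ge (j : ℕ) k with h | h
          · rw [hAcol j h]
            refine rot_mulVec_of_orth θ a b _ ?_ ?_ <;>
              rw [dotProduct_single, mul_one]
            exacts [(horth j h).1, (horth j h).2]
          · have hjkk : j = kk := Fin.ext (by omega)
            rw [hjkk, hAkk, hrotu]
        have := congrFun hmv i
        rw [mulVec_single] at this
        simpa using this
      obtain ⟨L, hL, hLprod⟩ := ih (k + 1) B (by omega) hBorth hBdet hBcol
      have hAeq : rot (-θ) a b * B = A := by
        rw [hB, ← Matrix.mul_assoc, rot_mul_rot ha hb hab, neg_add_cancel, rot_zero,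
          Matrix.one_mul]
      refine ⟨rot (-θ) a b :: L, ?_, ?_⟩
      · intro R hR
        rcases List.mem_cons.mp hR with rfl | hR
        · exact isRot_rot ha hb hab (-θ)
        · exact hL R hR
      · rw [List.prod_cons, hLprod, hAeq]
    by_cases hcase : u = Pi.single kk 1
    · refine ih (k + 1) A (by omega) hA hdet ?_
      intro j hj i
      rcases Nat.lt_or_ge (j : ℕ) k with h | h
      · exact hcol j h i
      · have hjkk : j = kk := Fin.ext (by omega)
        rw [hjkk]
        exact congrFun hcase i
    · set c : ℝ := u kk with hc
      set w : Fin n → ℝ := u - c • (Pi.single kk 1 : Fin n → ℝ) with hw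
      have hwkk : w kk = 0 := by simp [hw, hc]
      have hwu : w ⬝ᵥ w = 1 - c * c := by
        rw [hw]
        rw [sub_dotProduct, dotProduct_sub, dotProduct_sub, smul_dotProduct, dotProduct_smul,
          smul_dotProduct, dotProduct_single, single_dotProduct, single_dotProduct, huu]
        simp [smul_eq_mul, ← hc]
        try ring
      have hw0 : ∀ j : Fin n, (j : ℕ) < k → w j = 0 := by
        intro j hj
        have hne : j ≠ kk := by intro h; rw [h] at hj; omega
        simp [hw, hucol j hj, Pi.single_apply, hne]
      have hwnn : 0 ≤ w ⬝ᵥ w := Finset.sum_nonneg fun i _ => mul_self_nonneg _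
      by_cases hs : w = 0
      · -- u = c • e_kk with c = -1
        have hu' : u = c • (Pi.single kk 1 : Fin n → ℝ) := by
          have := sub_eq_zero.mp (hw ▸ hs)
          exact this
        have hc2 : c * c = 1 := by
          have h := huu
          rw [hu', smul_dotProduct, dotProduct_smul, single_dotProduct] at h
          simpa using h
        have hcneg : c = -1 := by
          rcases mul_self_eq_one_iff.mp hc2 with h | h
          · exfalso; apply hcase; rw [hu', h, one_smul]
          · exact h
        by_cases hlast : k + 1 < n
        · set k1 : Fin n := ⟨k + 1, hlast⟩ with hk1
          have hne : kk ≠ k1 := by intro h; have := congrArg Fin.val h; simp [hkk, hk1] at this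
          refine main Real.pi (Pi.single kk 1) (Pi.single k1 1) ?_ ?_ ?_ ?_ ?_
          · rw [single_dotProduct, Pi.single_eq_same, one_mul]
          · rw [single_dotProduct, Pi.single_eq_same, one_mul]
          · rw [single_dotProduct, one_mul, Pi.single_apply, if_neg hne]
          · intro j hj
            have hjkkne : j ≠ kk := by intro h; rw [h] at hj; omega
            have hjk1ne : j ≠ k1 := by
              intro h; rw [h] at hj
              have : (k1 : ℕ) = k + 1 := rfl
              omega
            exact ⟨Pi.single_eq_of_ne hjkkne 1, Pi.single_eq_of_ne hjk1ne 1⟩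
          · have h1 : (Pi.single kk 1 : Fin n → ℝ) ⬝ᵥ u = -1 := by
              rw [single_dotProduct, one_mul, ← hc, hcneg]
            have h2 : (Pi.single k1 1 : Fin n → ℝ) ⬝ᵥ u = 0 := by
              rw [single_dotProduct, one_mul, hu']
              have hz : (Pi.single kk 1 : Fin n → ℝ) k1 = 0 :=
                Pi.single_eq_of_ne (fun h => hne h.symm) 1
              simp [hz]
            rw [rot_mulVec, Real.sin_pi, Real.cos_pi, h1, h2, hu', hcneg]
            module
        · -- k + 1 = n : determinant contradiction
          exfalso
          have hAdiag : A = Matrix.diagonal (fun i => if i = kk then (-1:ℝ) else 1) := by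
            ext i j
            rcases eq_or_ne j kk with rfl | hj
            · show u i = _
              rw [hu', hcneg]
              rcases eq_or_ne i kk with rfl | hi
              · simp [diagonal_apply]
              · simp [diagonal_apply, hi, Pi.single_apply]
            · have hjk : (j : ℕ) < k := by
                have h2 := j.2
                have : (j : ℕ) ≠ k := fun h => hj (Fin.ext h)
                omega
              rw [hcol j hjk i, Pi.single_apply, diagonal_apply]
              rcases eq_or_ne i j with rfl | hi
              · simp [if_neg hj]
              · simp [hi]
          rw [hAdiag, det_diagonal] at hdet
          rw [Finset.prod_ite_eq' Finset.univ kk (fun _ => (-1:ℝ))] at hdet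
          simp only [Finset.mem_univ, if_true] at hdet
          linarith
      · -- generic Givens rotation
        have hwpos : 0 < w ⬝ᵥ w := by
          rcases lt_or_eq_of_le hwnn with h | h
          · exact h
          · exfalso; exact hs ((dotProduct_self_eq_zero).mp h.symm)
        set s : ℝ := Real.sqrt (w ⬝ᵥ w) with hsdef
        have hspos : 0 < s := Real.sqrt_pos.mpr hwpos
        have hss' : s * s = w ⬝ᵥ w := Real.mul_self_sqrt (le_of_lt hwpos)
        have hss2 : s * s = 1 - c * c := by rw [hss', hwu]
        set b : Fin n → ℝ := s⁻¹ • w with hbdef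
        have hwb : w = s • b := by
          rw [hbdef, smul_smul, mul_inv_cancel₀ (ne_of_gt hspos), one_smul]
        have hC1 : -1 ≤ c := by nlinarith
        have hC2 : c ≤ 1 := by nlinarith
        set θ := Real.arccos c with hθ
        have hcos : Real.cos θ = c := Real.cos_arccos hC1 hC2
        have hsin : Real.sin θ = s := by
          rw [hθ, Real.sin_arccos, hsdef, hwu]
          congr 1
          ring
        refine main θ (Pi.single kk 1) b ?_ ?_ ?_ ?_ ?_
        · rw [single_dotProduct, Pi.single_eq_same, one_mul]
        · rw [hbdef, smul_dotProduct, dotProduct_smul, ← hss']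
          simp only [smul_eq_mul]
          field_simp
        · rw [hbdef, dotProduct_smul, single_dotProduct, one_mul, hwkk, smul_zero]
        · intro j hj
          refine ⟨?_, ?_⟩
          · exact Pi.single_eq_of_ne (by intro h; rw [h] at hj; omega) 1
          · rw [hbdef, Pi.smul_apply, hw0 j hj, smul_zero]
        · -- rotation maps u to e_kk
          have hau : (Pi.single kk (1:ℝ)) ⬝ᵥ u = c := by
            rw [single_dotProduct, one_mul, ← hc]
          have hbu : b ⬝ᵥ u = s := by
            rw [hbdef, smul_dotProduct]
            have hwu' : w ⬝ᵥ u = 1 - c * c := by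
              rw [hw, sub_dotProduct, smul_dotProduct, single_dotProduct, huu]
              simp [smul_eq_mul, ← hc]
            rw [hwu', ← hss2]
            show s⁻¹ * (s * s) = s
            field_simp
          have huexp : u = c • (Pi.single kk 1 : Fin n → ℝ) + s • b := by
            rw [← hwb, hw]
            abel
          rw [rot_mulVec, hau, hbu, hcos, hsin, huexp]
          funext i
          simp only [Pi.add_apply, Pi.sub_apply, Pi.smul_apply, smul_eq_mul]
          linear_combination (Pi.single kk 1 : Fin n → ℝ) i * hss2

end Stmt17Aux
end

/-- Every special orthogonal real `n × n` matrix (`n ≥ 2`) is a finite ordered product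
of planar (Givens) rotations, each the matrix exponential of a rank-2 skew-symmetric
matrix `θ (a bᵀ − b aᵀ)` with `a, b` Euclidean-orthonormal. -/
theorem stmt_17 {n : ℕ} (hn : 2 ≤ n)
    (A : Matrix (Fin n) (Fin n) ℝ)
    (hA : Aᵀ * A = 1)
    (hdet : A.det = 1) :
    ∃ (M : ℕ) (θ : Fin M → ℝ) (a b : Fin M → (Fin n → ℝ)),
      (∀ m, ∑ i, a m i ^ 2 = 1) ∧
      (∀ m, ∑ i, b m i ^ 2 = 1) ∧
      (∀ m, ∑ i, a m i * b m i = 0) ∧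
      (List.ofFn fun m : Fin M =>
          NormedSpace.exp
            (θ m • (Matrix.vecMulVec (a m) (b m) - Matrix.vecMulVec (b m) (a m)))).prod
        = A := by
  obtain ⟨L, hL, hLprod⟩ :=
    Stmt17Aux.aux n 0 A (by omega) hA hdet (fun j hj => absurd hj (by omega))
  have hmem : ∀ m : Fin L.length, Stmt17Aux.IsRot (L.get m) := fun m => hL _ (List.getElem_mem _)
  choose θ a b h1 h2 h3 h4 using hmem
  refine ⟨L.length, θ, a, b, ?_, ?_, ?_, ?_⟩
  · intro m; simpa [dotProduct, pow_two] using h1 m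
  · intro m; simpa [dotProduct, pow_two] using h2 m
  · intro m; simpa [dotProduct] using h3 m
  · have hofn : (List.ofFn fun m : Fin L.length =>
        NormedSpace.exp
          (θ m • (Matrix.vecMulVec (a m) (b m) - Matrix.vecMulVec (b m) (a m)))) = L := by
      apply List.ext_getElem
      · simp
      · intro i hi1 hi2
        simp only [List.getElem_ofFn]
        have := h4 ⟨i, hi2⟩
        rw [List.get_eq_getElem] at this
        exact this
    rw [hofn, hLprod]
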